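/- Patience: if C is a well-formed configuration and there is no configuration C' such that C ⟶_i C', then C ⟶_σ C'' for some configuration C''. -/

import Mathlib

/- A formalization of the Calculus of Collision-prone Communicating Processes (CCCP). -/

namespace CCCP

/-- Channels are represented by natural numbers. -/
abbrev Chan : Type := ℕ

/-- A channel environment maps each channel to an exposure time and a value. -/
abbrev ChanEnv (V : Type) : Type := Chan → ℕ × V

/-- Expressions: values and (de Bruijn) data variables. -/
inductive Exp (V : Type) : Type where
  | val (v : V)
  | var (i : ℕ)

/-- Boolean expressions: equality tests and exposure checks. -/
inductive BExp (V : Type) : Type where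
  | beq (e1 e2 : Exp V)
  | exposed (c : Chan)

/-- Station code (processes).  Data variables and process (recursion) variables
are in de Bruijn style: `rcv c P Q` binds data variable 0 in `P`, and `fix P`
binds process variable 0 in `P`. -/
inductive Proc (V : Type) : Type where
  | broadcast (c : Chan) (e : Exp V) (P : Proc V)  -- c!⟨e⟩.P
  | rcv (c : Chan) (P Q : Proc V)                  -- ⌊c?(x).P⌋Q
  | sigma (P : Proc V)                             -- σ.P
  | tau (P : Proc V)                               -- τ.P
  | sum (P Q : Proc V)                             -- P + Q
  | mtch (b : BExp V) (P Q : Proc V)               -- [b]P,Q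
  | pvar (X : ℕ)                                   -- process variable
  | nil                                            -- termination
  | fix (P : Proc V)                               -- recursion

/-- System terms.  `active c P` is an active receiver c(x).P which binds data
variable 0 in `P`; `res c n v W` is the channel restriction νc:(n,v).W. -/
inductive Sys (V : Type) : Type where
  | proc (P : Proc V)
  | active (c : Chan) (P : Proc V)
  | par (W1 W2 : Sys V)
  | res (c : Chan) (n : ℕ) (v : V) (W : Sys V)

variable {V : Type}

/-- Evaluation of closed expressions. -/
def Exp.eval : Exp V → Option V
  | .val v => some v
  | .var _ => none

def Exp.liftD : Exp V → ℕ → Exp V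
  | .val v, _ => .val v
  | .var i, k => if i < k then .var i else .var (i + 1)

def Exp.substD : Exp V → ℕ → V → Exp V
  | .val w, _, _ => .val w
  | .var i, j, v => if i = j then .val v else if j < i then .var (i - 1) else .var i

def BExp.liftD : BExp V → ℕ → BExp V
  | .beq e1 e2, k => .beq (e1.liftD k) (e2.liftD k)
  | .exposed c, _ => .exposed c

def BExp.substD : BExp V → ℕ → V → BExp V
  | .beq e1 e2, j, v => .beq (e1.substD j v) (e2.substD j v)
  | .exposed c, _, _ => .exposed c

/-- Lifting of data variables (≥ k) in a process. -/
def Proc.liftD : Proc V → ℕ → Proc V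
  | .broadcast c e P, k => .broadcast c (e.liftD k) (Proc.liftD P k)
  | .rcv c P Q, k => .rcv c (Proc.liftD P (k + 1)) (Proc.liftD Q k)
  | .sigma P, k => .sigma (Proc.liftD P k)
  | .tau P, k => .tau (Proc.liftD P k)
  | .sum P Q, k => .sum (Proc.liftD P k) (Proc.liftD Q k)
  | .mtch b P Q, k => .mtch (b.liftD k) (Proc.liftD P k) (Proc.liftD Q k)
  | .pvar X, _ => .pvar X
  | .nil, _ => .nil
  | .fix P, k => .fix (Proc.liftD P k)

/-- Substitution of a (closed) value for data variable j in a process. -/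
def Proc.substD : Proc V → ℕ → V → Proc V
  | .broadcast c e P, j, v => .broadcast c (e.substD j v) (Proc.substD P j v)
  | .rcv c P Q, j, v => .rcv c (Proc.substD P (j + 1) v) (Proc.substD Q j v)
  | .sigma P, j, v => .sigma (Proc.substD P j v)
  | .tau P, j, v => .tau (Proc.substD P j v)
  | .sum P Q, j, v => .sum (Proc.substD P j v) (Proc.substD Q j v)
  | .mtch b P Q, j, v => .mtch (b.substD j v) (Proc.substD P j v) (Proc.substD Q j v)
  | .pvar X, _, _ => .pvar X
  | .nil, _, _ => .nil
  | .fix P, j, v => .fix (Proc.substD P j v)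

/-- Lifting of process variables (≥ k) in a process. -/
def Proc.liftP : Proc V → ℕ → Proc V
  | .broadcast c e P, k => .broadcast c e (Proc.liftP P k)
  | .rcv c P Q, k => .rcv c (Proc.liftP P k) (Proc.liftP Q k)
  | .sigma P, k => .sigma (Proc.liftP P k)
  | .tau P, k => .tau (Proc.liftP P k)
  | .sum P Q, k => .sum (Proc.liftP P k) (Proc.liftP Q k)
  | .mtch b P Q, k => .mtch b (Proc.liftP P k) (Proc.liftP Q k)
  | .pvar X, k => if X < k then .pvar X else .pvar (X + 1)
  | .nil, _ => .nil
  | .fix P, k => .fix (Proc.liftP P (k + 1))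

/-- Substitution of a process S for process variable j (used for unfolding fix). -/
def Proc.substP : Proc V → ℕ → Proc V → Proc V
  | .broadcast c e P, j, S => .broadcast c e (Proc.substP P j S)
  | .rcv c P Q, j, S => .rcv c (Proc.substP P j (Proc.liftD S 0)) (Proc.substP Q j S)
  | .sigma P, j, S => .sigma (Proc.substP P j S)
  | .tau P, j, S => .tau (Proc.substP P j S)
  | .sum P Q, j, S => .sum (Proc.substP P j S) (Proc.substP Q j S)
  | .mtch b P Q, j, S => .mtch b (Proc.substP P j S) (Proc.substP Q j S)
  | .pvar X, j, S => if X = j then S else if j < X then .pvar (X - 1) else .pvar X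
  | .nil, _, _ => .nil
  | .fix P, j, S => .fix (Proc.substP P (j + 1) (Proc.liftP S 0))

/-- Iterated time-delay prefix σ^n.P -/
def Proc.sigmaIter : ℕ → Proc V → Proc V
  | 0, P => P
  | n + 1, P => .sigma (Proc.sigmaIter n P)

/-- Does the process contain an unguarded receiver listening on channel c? -/
def Proc.hasRcv : Proc V → Chan → Bool
  | .broadcast _ _ _, _ => false
  | .rcv d _ _, c => d == c
  | .sigma _, _ => false
  | .tau _, _ => false
  | .sum P Q, c => Proc.hasRcv P c || Proc.hasRcv Q c
  | .mtch _ _ _, _ => false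
  | .pvar _, _ => false
  | .nil, _ => false
  | .fix P, c => Proc.hasRcv P c

/-- Does the system term contain an unguarded receiver listening on channel c? -/
def Sys.hasRcv : Sys V → Chan → Bool
  | .proc P, c => P.hasRcv c
  | .active _ _, _ => false
  | .par W1 W2, c => Sys.hasRcv W1 c || Sys.hasRcv W2 c
  | .res d _ _ W, c => if d = c then false else Sys.hasRcv W c

/-- The predicate rcv(Γ ▷ W, c): channel c is idle in Γ and W contains an
unguarded receiver actively awaiting a message on c. -/
def Isrcv (Γ : ChanEnv V) (W : Sys V) (c : Chan) : Prop :=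
  (Γ c).1 = 0 ∧ W.hasRcv c = true

/- Closedness of terms: data variables < dk and process variables < pk. -/

def Exp.closedUnder : Exp V → ℕ → Bool
  | .val _, _ => true
  | .var i, dk => decide (i < dk)

def BExp.closedUnder : BExp V → ℕ → Bool
  | .beq e1 e2, dk => e1.closedUnder dk && e2.closedUnder dk
  | .exposed _, _ => true

def Proc.closedUnder : Proc V → ℕ → ℕ → Bool
  | .broadcast _ e P, dk, pk => e.closedUnder dk && Proc.closedUnder P dk pk
  | .rcv _ P Q, dk, pk => Proc.closedUnder P (dk + 1) pk && Proc.closedUnder Q dk pk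
  | .sigma P, dk, pk => Proc.closedUnder P dk pk
  | .tau P, dk, pk => Proc.closedUnder P dk pk
  | .sum P Q, dk, pk => Proc.closedUnder P dk pk && Proc.closedUnder Q dk pk
  | .mtch b P Q, dk, pk => b.closedUnder dk && Proc.closedUnder P dk pk && Proc.closedUnder Q dk pk
  | .pvar X, _, pk => decide (X < pk)
  | .nil, _, _ => true
  | .fix P, dk, pk => Proc.closedUnder P dk (pk + 1)

def Sys.closedUnder : Sys V → ℕ → ℕ → Bool
  | .proc P, dk, pk => P.closedUnder dk pk
  | .active _ P, dk, pk => P.closedUnder (dk + 1) pk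
  | .par W1 W2, dk, pk => Sys.closedUnder W1 dk pk && Sys.closedUnder W2 dk pk
  | .res _ _ _ W, dk, pk => Sys.closedUnder W dk pk

/-- Process variable k does not occur unguarded (i.e. every occurrence of k lies
under a time-consuming construct: broadcast, receiver, σ-prefix or matching). -/
def Proc.guardedVar : Proc V → ℕ → Bool
  | .broadcast _ _ _, _ => true
  | .rcv _ _ _, _ => true
  | .sigma _, _ => true
  | .tau P, k => Proc.guardedVar P k
  | .sum P Q, k => Proc.guardedVar P k && Proc.guardedVar Q k
  | .mtch _ _ _, _ => true
  | .pvar X, k => X != k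
  | .nil, _ => true
  | .fix P, k => Proc.guardedVar P (k + 1)

/-- Every recursion fix X.P in the term has its recursion variable guarded by a
time-consuming construct. -/
def Proc.wfRec : Proc V → Bool
  | .broadcast _ _ P => Proc.wfRec P
  | .rcv _ P Q => Proc.wfRec P && Proc.wfRec Q
  | .sigma P => Proc.wfRec P
  | .tau P => Proc.wfRec P
  | .sum P Q => Proc.wfRec P && Proc.wfRec Q
  | .mtch _ P Q => Proc.wfRec P && Proc.wfRec Q
  | .pvar _ => true
  | .nil => true
  | .fix P => Proc.wfRec P && Proc.guardedVar P 0

def Sys.wfRec : Sys V → Bool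
  | .proc P => P.wfRec
  | .active _ P => P.wfRec
  | .par W1 W2 => Sys.wfRec W1 && Sys.wfRec W2
  | .res _ _ _ W => Sys.wfRec W

/-- A legal system term: closed, and all recursion variables guarded. -/
def Sys.proper (W : Sys V) : Prop :=
  W.closedUnder 0 0 = true ∧ W.wfRec = true

/- Free channel occurrences. -/

def BExp.usesChan : BExp V → Chan → Bool
  | .beq _ _, _ => false
  | .exposed d, c => d == c

def Proc.freeChan : Proc V → Chan → Bool
  | .broadcast d _ P, c => d == c || Proc.freeChan P c
  | .rcv d P Q, c => d == c || Proc.freeChan P c || Proc.freeChan Q c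
  | .sigma P, c => Proc.freeChan P c
  | .tau P, c => Proc.freeChan P c
  | .sum P Q, c => Proc.freeChan P c || Proc.freeChan Q c
  | .mtch b P Q, c => b.usesChan c || Proc.freeChan P c || Proc.freeChan Q c
  | .pvar _, _ => false
  | .nil, _ => false
  | .fix P, c => Proc.freeChan P c

def Sys.freeChan : Sys V → Chan → Bool
  | .proc P, c => P.freeChan c
  | .active d P, c => d == c || P.freeChan c
  | .par W1 W2, c => Sys.freeChan W1 c || Sys.freeChan W2 c
  | .res d _ _ W, c => if d = c then false else Sys.freeChan W c

/-- Labels of the intensional semantics. -/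
inductive Label (V : Type) : Type where
  | out (c : Chan) (v : V)    -- c!v
  | inp (c : Chan) (v : V)    -- c?v
  | tau
  | sigma

def Label.usesChan : Label V → Chan → Prop
  | .out d _, c => d = c
  | .inp d _, c => d = c
  | .tau, _ => False
  | .sigma, _ => False

/-- Updating a channel environment at channel c upon a broadcast (or input) of
value v: this models collisions. -/
def updBcast (errv : V) (δ : V → ℕ) (Γ : ChanEnv V) (c : Chan) (v : V) : ChanEnv V :=
  fun d => if d = c then
      (if (Γ c).1 = 0 then (δ v, v) else (max (δ v) (Γ c).1, errv))
    else Γ d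

/-- The channel-environment update upd_λ(Γ). -/
def updL (errv : V) (δ : V → ℕ) : Label V → ChanEnv V → ChanEnv V
  | .out c v, Γ => updBcast errv δ Γ c v
  | .inp c v, Γ => updBcast errv δ Γ c v
  | .tau, Γ => Γ
  | .sigma, Γ => fun c => ((Γ c).1 - 1, (Γ c).2)

/-- Γ[c ↦ p] -/
def updEnv (Γ : ChanEnv V) (c : Chan) (p : ℕ × V) : ChanEnv V :=
  fun d => if d = c then p else Γ d

/-- Evaluation of (closed) boolean expressions relative to a channel environment. -/
inductive BEval (Γ : ChanEnv V) : BExp V → Bool → Prop where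
  | beqT {e1 e2 : Exp V} {v : V} :
      e1.eval = some v → e2.eval = some v → BEval Γ (.beq e1 e2) true
  | beqF {e1 e2 : Exp V} {v1 v2 : V} :
      e1.eval = some v1 → e2.eval = some v2 → v1 ≠ v2 → BEval Γ (.beq e1 e2) false
  | expT {c : Chan} : 0 < (Γ c).1 → BEval Γ (.exposed c) true
  | expF {c : Chan} : (Γ c).1 = 0 → BEval Γ (.exposed c) false

/-- The intensional semantics of CCCP: Γ ▷ W --λ--> W'.
Parameters: `errv` is the error value, `δ` gives the transmission time of values. -/
inductive Step (errv : V) (δ : V → ℕ) : ChanEnv V → Sys V → Label V → Sys V → Prop where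
  -- (Snd)
  | snd {Γ : ChanEnv V} {c : Chan} {e : Exp V} {v : V} {P : Proc V} :
      e.eval = some v →
      Step errv δ Γ (.proc (.broadcast c e P)) (.out c v) (.proc (Proc.sigmaIter (δ v) P))
  -- (Rcv)
  | rcv {Γ : ChanEnv V} {c : Chan} {P Q : Proc V} {v : V} :
      (Γ c).1 = 0 →
      Step errv δ Γ (.proc (.rcv c P Q)) (.inp c v) (.active c P)
  -- (RcvIgn)
  | rcvIgn {Γ : ChanEnv V} {W : Sys V} {c : Chan} {v : V} :
      ¬ Isrcv Γ W c →
      Step errv δ Γ W (.inp c v) W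
  -- (Sync) and its symmetric counterpart
  | sync {Γ : ChanEnv V} {W1 W2 W1' W2' : Sys V} {c : Chan} {v : V} :
      Step errv δ Γ W1 (.out c v) W1' → Step errv δ Γ W2 (.inp c v) W2' →
      Step errv δ Γ (.par W1 W2) (.out c v) (.par W1' W2')
  | syncR {Γ : ChanEnv V} {W1 W2 W1' W2' : Sys V} {c : Chan} {v : V} :
      Step errv δ Γ W1 (.inp c v) W1' → Step errv δ Γ W2 (.out c v) W2' →
      Step errv δ Γ (.par W1 W2) (.out c v) (.par W1' W2')
  -- (RcvPar)
  | rcvPar {Γ : ChanEnv V} {W1 W2 W1' W2' : Sys V} {c : Chan} {v : V} :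
      Step errv δ Γ W1 (.inp c v) W1' → Step errv δ Γ W2 (.inp c v) W2' →
      Step errv δ Γ (.par W1 W2) (.inp c v) (.par W1' W2')
  -- (TimeNil)
  | timeNil {Γ : ChanEnv V} :
      Step errv δ Γ (.proc .nil) .sigma (.proc .nil)
  -- (Sleep)
  | sleep {Γ : ChanEnv V} {P : Proc V} :
      Step errv δ Γ (.proc (.sigma P)) .sigma (.proc P)
  -- (ActRcv)
  | actRcv {Γ : ChanEnv V} {c : Chan} {P : Proc V} :
      1 < (Γ c).1 →
      Step errv δ Γ (.active c P) .sigma (.active c P)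
  -- (EndRcv)
  | endRcv {Γ : ChanEnv V} {c : Chan} {P : Proc V} {w : V} :
      (Γ c).1 = 1 → (Γ c).2 = w →
      Step errv δ Γ (.active c P) .sigma (.proc (Proc.substD P 0 w))
  -- (Timeout)
  | timeout {Γ : ChanEnv V} {c : Chan} {P Q : Proc V} :
      (Γ c).1 = 0 →
      Step errv δ Γ (.proc (.rcv c P Q)) .sigma (.proc Q)
  -- (RcvLate)
  | rcvLate {Γ : ChanEnv V} {c : Chan} {P Q : Proc V} :
      0 < (Γ c).1 →
      Step errv δ Γ (.proc (.rcv c P Q)) .tau (.active c (Proc.liftD (Proc.substD P 0 errv) 0))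
  -- (Tau)
  | tauStep {Γ : ChanEnv V} {P : Proc V} :
      Step errv δ Γ (.proc (.tau P)) .tau (.proc P)
  -- (Then)
  | thenB {Γ : ChanEnv V} {b : BExp V} {P Q : Proc V} :
      BEval Γ b true →
      Step errv δ Γ (.proc (.mtch b P Q)) .tau (.proc (.sigma P))
  -- (Else)
  | elseB {Γ : ChanEnv V} {b : BExp V} {P Q : Proc V} :
      BEval Γ b false →
      Step errv δ Γ (.proc (.mtch b P Q)) .tau (.proc (.sigma Q))
  -- (TimePar)
  | timePar {Γ : ChanEnv V} {W1 W2 W1' W2' : Sys V} :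
      Step errv δ Γ W1 .sigma W1' → Step errv δ Γ W2 .sigma W2' →
      Step errv δ Γ (.par W1 W2) .sigma (.par W1' W2')
  -- (TauPar) and its symmetric counterpart
  | tauParL {Γ : ChanEnv V} {W1 W2 W1' : Sys V} :
      Step errv δ Γ W1 .tau W1' →
      Step errv δ Γ (.par W1 W2) .tau (.par W1' W2)
  | tauParR {Γ : ChanEnv V} {W1 W2 W2' : Sys V} :
      Step errv δ Γ W2 .tau W2' →
      Step errv δ Γ (.par W1 W2) .tau (.par W1 W2')
  -- (Rec)
  | recS {Γ : ChanEnv V} {P : Proc V} {lam : Label V} {W : Sys V} :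
      Step errv δ Γ (.proc (Proc.substP P 0 (.fix P))) lam W →
      Step errv δ Γ (.proc (.fix P)) lam W
  -- (Sum) and its symmetric counterpart
  | sumL {Γ : ChanEnv V} {P Q : Proc V} {lam : Label V} {W : Sys V} :
      Step errv δ Γ (.proc P) lam W → (lam = .tau ∨ ∃ c v, lam = .out c v) →
      Step errv δ Γ (.proc (.sum P Q)) lam W
  | sumR {Γ : ChanEnv V} {P Q : Proc V} {lam : Label V} {W : Sys V} :
      Step errv δ Γ (.proc Q) lam W → (lam = .tau ∨ ∃ c v, lam = .out c v) →
      Step errv δ Γ (.proc (.sum P Q)) lam W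
  -- (SumTime)
  | sumTime {Γ : ChanEnv V} {P Q P' Q' : Proc V} :
      Step errv δ Γ (.proc P) .sigma (.proc P') → Step errv δ Γ (.proc Q) .sigma (.proc Q') →
      Step errv δ Γ (.proc (.sum P Q)) .sigma (.proc (.sum P' Q'))
  -- (SumRcv) and its symmetric counterpart
  | sumRcvL {Γ : ChanEnv V} {P Q : Proc V} {c : Chan} {v : V} {W : Sys V} :
      Step errv δ Γ (.proc P) (.inp c v) W → Isrcv Γ (.proc P) c →
      Step errv δ Γ (.proc (.sum P Q)) (.inp c v) W
  | sumRcvR {Γ : ChanEnv V} {P Q : Proc V} {c : Chan} {v : V} {W : Sys V} :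
      Step errv δ Γ (.proc Q) (.inp c v) W → Isrcv Γ (.proc Q) c →
      Step errv δ Γ (.proc (.sum P Q)) (.inp c v) W
  -- (ResI)
  | resI {Γ : ChanEnv V} {c : Chan} {n : ℕ} {v w : V} {W W' : Sys V} :
      Step errv δ (updEnv Γ c (n, v)) W (.out c w) W' →
      Step errv δ Γ (.res c n v W) .tau
        (.res c (updBcast errv δ (updEnv Γ c (n, v)) c w c).1
                (updBcast errv δ (updEnv Γ c (n, v)) c w c).2 W')
  -- (ResV)
  | resV {Γ : ChanEnv V} {c : Chan} {n : ℕ} {v : V} {W W' : Sys V} {lam : Label V} :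
      Step errv δ (updEnv Γ c (n, v)) W lam W' →
      ¬ lam.usesChan c → lam ≠ .sigma →
      Step errv δ Γ (.res c n v W) lam (.res c n v W')
  -- time passage under restriction
  | resT {Γ : ChanEnv V} {c : Chan} {n : ℕ} {v : V} {W W' : Sys V} :
      Step errv δ (updEnv Γ c (n, v)) W .sigma W' →
      Step errv δ Γ (.res c n v W) .sigma (.res c (n - 1) v W')

/-- Configurations. -/
abbrev Config (V : Type) : Type := ChanEnv V × Sys V

/-- Instantaneous reductions (broadcast or internal step). -/
def RedI (errv : V) (δ : V → ℕ) (C C' : Config V) : Prop :=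
  (Step errv δ C.1 C.2 .tau C'.2 ∧ C'.1 = C.1) ∨
  (∃ c v, Step errv δ C.1 C.2 (.out c v) C'.2 ∧ C'.1 = updBcast errv δ C.1 c v)

/-- Timed reductions. -/
def RedT (errv : V) (δ : V → ℕ) (C C' : Config V) : Prop :=
  Step errv δ C.1 C.2 .sigma C'.2 ∧ C'.1 = updL errv δ .sigma C.1

/-- Reductions of configurations. -/
def Red (errv : V) (δ : V → ℕ) (C C' : Config V) : Prop :=
  RedI errv δ C C' ∨ RedT errv δ C C'

def RedStar (errv : V) (δ : V → ℕ) : Config V → Config V → Prop :=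
  Relation.ReflTransGen (Red errv δ)

def RedIStar (errv : V) (δ : V → ℕ) : Config V → Config V → Prop :=
  Relation.ReflTransGen (RedI errv δ)

/-- Iteration of a relation a fixed number of times. -/
def relPow {α : Type _} (r : α → α → Prop) : ℕ → α → α → Prop
  | 0 => Eq
  | n + 1 => fun a c => ∃ b, r a b ∧ relPow r n b c

/-- Strong barb: channel c is exposed. -/
def Barb (C : Config V) (c : Chan) : Prop := 0 < (C.1 c).1

/-- Weak barb. -/
def WBarb (errv : V) (δ : V → ℕ) (C : Config V) (c : Chan) : Prop :=
  ∃ C', RedStar errv δ C C' ∧ Barb C' c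

/-- Extensional actions. -/
inductive Act (V : Type) : Type where
  | inp (c : Chan) (v : V)     -- c?v
  | time                       -- σ
  | tauA                       -- τ
  | deliver (c : Chan) (v : V) -- γ(c,v)
  | idle (c : Chan)            -- ι(c)

/-- The extensional LTS over configurations. -/
inductive EStep (errv : V) (δ : V → ℕ) : Config V → Act V → Config V → Prop where
  | einp {Γ : ChanEnv V} {W W' : Sys V} {c : Chan} {v : V} :
      Step errv δ Γ W (.inp c v) W' →
      EStep errv δ (Γ, W) (.inp c v) (updBcast errv δ Γ c v, W')
  | etime {Γ : ChanEnv V} {W W' : Sys V} :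
      Step errv δ Γ W .sigma W' →
      EStep errv δ (Γ, W) .time (updL errv δ .sigma Γ, W')
  | eshh {Γ : ChanEnv V} {W W' : Sys V} {c : Chan} {v : V} :
      Step errv δ Γ W (.out c v) W' →
      EStep errv δ (Γ, W) .tauA (updBcast errv δ Γ c v, W')
  | etau {Γ : ChanEnv V} {W W' : Sys V} :
      Step errv δ Γ W .tau W' →
      EStep errv δ (Γ, W) .tauA (Γ, W')
  | edeliver {Γ : ChanEnv V} {W W' : Sys V} {c : Chan} {v : V} :
      Γ c = (1, v) → Step errv δ Γ W .sigma W' →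
      EStep errv δ (Γ, W) (.deliver c v) (updL errv δ .sigma Γ, W')
  | eidle {Γ : ChanEnv V} {W : Sys V} {c : Chan} :
      (Γ c).1 = 0 →
      EStep errv δ (Γ, W) (.idle c) (Γ, W)

/-- Weak internal moves ⟹. -/
def TauStar (errv : V) (δ : V → ℕ) : Config V → Config V → Prop :=
  Relation.ReflTransGen (fun C C' => EStep errv δ C .tauA C')

/-- Weak extensional action C ⟹α⟹ C'. -/
def WStep (errv : V) (δ : V → ℕ) (C : Config V) (α : Act V) (C' : Config V) : Prop :=
  ∃ C1 C2, TauStar errv δ C C1 ∧ EStep errv δ C1 α C2 ∧ TauStar errv δ C2 C'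

/-- C ⟹α̂⟹ C'. -/
def WHat (errv : V) (δ : V → ℕ) (C : Config V) (α : Act V) (C' : Config V) : Prop :=
  match α with
  | .tauA => TauStar errv δ C C'
  | _ => WStep errv δ C α C'

/-- (Weak) bisimulations on the extensional LTS. -/
def IsBisim (errv : V) (δ : V → ℕ) (R : Config V → Config V → Prop) : Prop :=
  Symmetric R ∧
  ∀ C1 C2, R C1 C2 → ∀ (α : Act V) C1', EStep errv δ C1 α C1' →
    ∃ C2', WHat errv δ C2 α C2' ∧ R C1' C2'

/-- Weak bisimilarity ≈. -/
def Bisim (errv : V) (δ : V → ℕ) (C1 C2 : Config V) : Prop :=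
  ∃ R, IsBisim errv δ R ∧ R C1 C2

/-- Barb-preserving relations. -/
def BarbPreserving (errv : V) (δ : V → ℕ) (R : Config V → Config V → Prop) : Prop :=
  ∀ C1 C2, R C1 C2 → ∀ c, WBarb errv δ C1 c → WBarb errv δ C2 c

/-- Reduction-closed relations. -/
def ReductionClosed (errv : V) (δ : V → ℕ) (R : Config V → Config V → Prop) : Prop :=
  ∀ C1 C2, R C1 C2 → ∀ C1', Red errv δ C1 C1' →
    ∃ C2', RedStar errv δ C2 C2' ∧ R C1' C2'

/-- Contextual relations. -/
def Contextual (R : Config V → Config V → Prop) : Prop :=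
  ∀ Γ1 W1 Γ2 W2, R (Γ1, W1) (Γ2, W2) →
    ∀ W : Sys V, W.proper → R (Γ1, .par W1 W) (Γ2, .par W2 W)

/-- Reduction barbed congruence ≃: the largest symmetric, barb-preserving,
reduction-closed and contextual relation. -/
def RBC (errv : V) (δ : V → ℕ) (C1 C2 : Config V) : Prop :=
  ∃ R, Symmetric R ∧ BarbPreserving errv δ R ∧ ReductionClosed errv δ R ∧
    Contextual R ∧ R C1 C2

/-- Well-formed configurations. -/
inductive WF : ChanEnv V → Sys V → Prop where
  | wfProc {Γ : ChanEnv V} (P : Proc V) : WF Γ (.proc P)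
  | wfActive {Γ : ChanEnv V} {c : Chan} (P : Proc V) : 0 < (Γ c).1 → WF Γ (.active c P)
  | wfPar {Γ : ChanEnv V} {W1 W2 : Sys V} : WF Γ W1 → WF Γ W2 → WF Γ (.par W1 W2)
  | wfRes {Γ : ChanEnv V} {c : Chan} {n : ℕ} {v : V} {W : Sys V} :
      WF (updEnv Γ c (n, v)) W → WF Γ (.res c n v W)

/-- Comparison of channel environments: Γ ≤ Γ'. -/
def EnvLE (Γ Γ' : ChanEnv V) : Prop := ∀ c : Chan, (Γ c).1 ≤ (Γ' c).1

section Patience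

lemma Exp.eval_of_closed {e : Exp V} (h : e.closedUnder 0 = true) : ∃ v, e.eval = some v := by
  cases e with
  | val v => exact ⟨v, rfl⟩
  | var i => simp [Exp.closedUnder] at h

lemma Exp.closedUnder_mono {e : Exp V} {d d' : ℕ} (hd : d ≤ d') (h : e.closedUnder d = true) :
    e.closedUnder d' = true := by
  cases e with
  | val v => rfl
  | var i => simp [Exp.closedUnder] at h ⊢; omega

lemma BExp.closedUnder_mono {b : BExp V} {d d' : ℕ} (hd : d ≤ d') (h : b.closedUnder d = true) :
    b.closedUnder d' = true := by
  cases b with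
  | beq e1 e2 =>
    simp [BExp.closedUnder] at h ⊢
    exact ⟨Exp.closedUnder_mono hd h.1, Exp.closedUnder_mono hd h.2⟩
  | exposed c => rfl

lemma Proc.closedUnder_mono (P : Proc V) : ∀ {dk pk dk' pk' : ℕ}, dk ≤ dk' → pk ≤ pk' →
    P.closedUnder dk pk = true → P.closedUnder dk' pk' = true := by
  induction P with
  | broadcast c e P ih =>
    intro dk pk dk' pk' hd hp h
    simp [Proc.closedUnder] at h ⊢
    exact ⟨Exp.closedUnder_mono hd h.1, ih hd hp h.2⟩
  | rcv c P Q ihP ihQ =>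
    intro dk pk dk' pk' hd hp h
    simp [Proc.closedUnder] at h ⊢
    exact ⟨ihP (by omega) hp h.1, ihQ hd hp h.2⟩
  | sigma P ih => intro dk pk dk' pk' hd hp h; exact ih hd hp h
  | tau P ih => intro dk pk dk' pk' hd hp h; exact ih hd hp h
  | sum P Q ihP ihQ =>
    intro dk pk dk' pk' hd hp h
    simp [Proc.closedUnder] at h ⊢
    exact ⟨ihP hd hp h.1, ihQ hd hp h.2⟩
  | mtch b P Q ihP ihQ =>
    intro dk pk dk' pk' hd hp h
    simp [Proc.closedUnder] at h ⊢
    exact ⟨⟨BExp.closedUnder_mono hd h.1.1, ihP hd hp h.1.2⟩, ihQ hd hp h.2⟩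
  | pvar X => intro dk pk dk' pk' hd hp h; simp [Proc.closedUnder] at h ⊢; omega
  | nil => intro dk pk dk' pk' hd hp h; rfl
  | fix P ih =>
    intro dk pk dk' pk' hd hp h
    exact ih hd (by omega) h

lemma Exp.closedUnder_liftD {e : Exp V} {k dk : ℕ} (hk : k ≤ dk) (h : e.closedUnder dk = true) :
    (e.liftD k).closedUnder (dk + 1) = true := by
  cases e with
  | val v => rfl
  | var i =>
    simp [Exp.closedUnder] at h
    simp only [Exp.liftD]
    split <;> simp [Exp.closedUnder] <;> omega

lemma BExp.closedUnder_liftD {b : BExp V} {k dk : ℕ} (hk : k ≤ dk) (h : b.closedUnder dk = true) :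
    (b.liftD k).closedUnder (dk + 1) = true := by
  cases b with
  | beq e1 e2 =>
    simp [BExp.closedUnder, BExp.liftD] at h ⊢
    exact ⟨Exp.closedUnder_liftD hk h.1, Exp.closedUnder_liftD hk h.2⟩
  | exposed c => rfl

lemma Proc.closedUnder_liftD (P : Proc V) : ∀ {k dk pk : ℕ}, k ≤ dk →
    P.closedUnder dk pk = true → (P.liftD k).closedUnder (dk + 1) pk = true := by
  induction P with
  | broadcast c e P ih =>
    intro k dk pk hk h
    simp [Proc.closedUnder, Proc.liftD] at h ⊢
    exact ⟨Exp.closedUnder_liftD hk h.1, ih hk h.2⟩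
  | rcv c P Q ihP ihQ =>
    intro k dk pk hk h
    simp [Proc.closedUnder, Proc.liftD] at h ⊢
    exact ⟨ihP (by omega) h.1, ihQ hk h.2⟩
  | sigma P ih => intro k dk pk hk h; exact ih hk h
  | tau P ih => intro k dk pk hk h; exact ih hk h
  | sum P Q ihP ihQ =>
    intro k dk pk hk h
    simp [Proc.closedUnder, Proc.liftD] at h ⊢
    exact ⟨ihP hk h.1, ihQ hk h.2⟩
  | mtch b P Q ihP ihQ =>
    intro k dk pk hk h
    simp [Proc.closedUnder, Proc.liftD] at h ⊢
    exact ⟨⟨BExp.closedUnder_liftD hk h.1.1, ihP hk h.1.2⟩, ihQ hk h.2⟩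
  | pvar X => intro k dk pk hk h; exact h
  | nil => intro k dk pk hk h; rfl
  | fix P ih => intro k dk pk hk h; exact ih hk h

lemma Proc.closedUnder_liftP (P : Proc V) : ∀ {k dk pk : ℕ}, k ≤ pk →
    P.closedUnder dk pk = true → (P.liftP k).closedUnder dk (pk + 1) = true := by
  induction P with
  | broadcast c e P ih =>
    intro k dk pk hk h
    simp [Proc.closedUnder, Proc.liftP] at h ⊢
    exact ⟨Exp.closedUnder_mono le_rfl h.1, ih hk h.2⟩
  | rcv c P Q ihP ihQ =>
    intro k dk pk hk h
    simp [Proc.closedUnder, Proc.liftP] at h ⊢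
    exact ⟨ihP hk h.1, ihQ hk h.2⟩
  | sigma P ih => intro k dk pk hk h; exact ih hk h
  | tau P ih => intro k dk pk hk h; exact ih hk h
  | sum P Q ihP ihQ =>
    intro k dk pk hk h
    simp [Proc.closedUnder, Proc.liftP] at h ⊢
    exact ⟨ihP hk h.1, ihQ hk h.2⟩
  | mtch b P Q ihP ihQ =>
    intro k dk pk hk h
    simp [Proc.closedUnder, Proc.liftP] at h ⊢
    exact ⟨⟨h.1.1, ihP hk h.1.2⟩, ihQ hk h.2⟩
  | pvar X =>
    intro k dk pk hk h
    simp [Proc.closedUnder] at h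
    simp only [Proc.liftP]
    split <;> simp [Proc.closedUnder] <;> omega
  | nil => intro k dk pk hk h; rfl
  | fix P ih => intro k dk pk hk h; exact ih (by omega) h

lemma Proc.liftP_eq_of_closed (P : Proc V) : ∀ {k dk pk : ℕ}, P.closedUnder dk pk = true →
    pk ≤ k → P.liftP k = P := by
  induction P with
  | broadcast c e P ih =>
    intro k dk pk h hk
    simp [Proc.closedUnder] at h
    simp only [Proc.liftP]
    rw [ih h.2 hk]
  | rcv c P Q ihP ihQ =>
    intro k dk pk h hk
    simp [Proc.closedUnder] at h
    simp only [Proc.liftP]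
    rw [ihP h.1 hk, ihQ h.2 hk]
  | sigma P ih =>
    intro k dk pk h hk
    simp only [Proc.liftP]
    rw [ih h hk]
  | tau P ih =>
    intro k dk pk h hk
    simp only [Proc.liftP]
    rw [ih h hk]
  | sum P Q ihP ihQ =>
    intro k dk pk h hk
    simp [Proc.closedUnder] at h
    simp only [Proc.liftP]
    rw [ihP h.1 hk, ihQ h.2 hk]
  | mtch b P Q ihP ihQ =>
    intro k dk pk h hk
    simp [Proc.closedUnder] at h
    simp only [Proc.liftP]
    rw [ihP h.1.2 hk, ihQ h.2 hk]
  | pvar X =>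
    intro k dk pk h hk
    simp [Proc.closedUnder] at h
    simp only [Proc.liftP]
    rw [if_pos (by omega)]
  | nil => intro k dk pk h hk; rfl
  | fix P ih =>
    intro k dk pk h hk
    simp only [Proc.liftP]
    rw [ih h (by omega)]

lemma Proc.guardedVar_of_closed (P : Proc V) : ∀ {dk pk k : ℕ}, P.closedUnder dk pk = true →
    pk ≤ k → P.guardedVar k = true := by
  induction P with
  | broadcast c e P ih => intro dk pk k h hk; rfl
  | rcv c P Q ihP ihQ => intro dk pk k h hk; rfl
  | sigma P ih => intro dk pk k h hk; rfl
  | tau P ih => intro dk pk k h hk; exact ih h hk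
  | sum P Q ihP ihQ =>
    intro dk pk k h hk
    simp [Proc.closedUnder] at h
    simp [Proc.guardedVar]
    exact ⟨ihP h.1 hk, ihQ h.2 hk⟩
  | mtch b P Q ihP ihQ => intro dk pk k h hk; rfl
  | pvar X =>
    intro dk pk k h hk
    simp [Proc.closedUnder] at h
    simp [Proc.guardedVar]
    omega
  | nil => intro dk pk k h hk; rfl
  | fix P ih => intro dk pk k h hk; exact ih h (by omega)

lemma Proc.guardedVar_liftD (P : Proc V) : ∀ {j k : ℕ},
    (P.liftD j).guardedVar k = P.guardedVar k := by
  induction P with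
  | broadcast c e P ih => intro j k; rfl
  | rcv c P Q ihP ihQ => intro j k; rfl
  | sigma P ih => intro j k; rfl
  | tau P ih => intro j k; exact ih
  | sum P Q ihP ihQ =>
    intro j k
    simp only [Proc.liftD, Proc.guardedVar]
    rw [ihP, ihQ]
  | mtch b P Q ihP ihQ => intro j k; rfl
  | pvar X => intro j k; rfl
  | nil => intro j k; rfl
  | fix P ih =>
    intro j k
    simp only [Proc.liftD, Proc.guardedVar]
    exact ih

lemma Proc.wfRec_liftD (P : Proc V) : ∀ {j : ℕ}, (P.liftD j).wfRec = P.wfRec := by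
  induction P with
  | broadcast c e P ih => intro j; exact ih
  | rcv c P Q ihP ihQ =>
    intro j
    simp only [Proc.liftD, Proc.wfRec]
    rw [ihP, ihQ]
  | sigma P ih => intro j; exact ih
  | tau P ih => intro j; exact ih
  | sum P Q ihP ihQ =>
    intro j
    simp only [Proc.liftD, Proc.wfRec]
    rw [ihP, ihQ]
  | mtch b P Q ihP ihQ =>
    intro j
    simp only [Proc.liftD, Proc.wfRec]
    rw [ihP, ihQ]
  | pvar X => intro j; rfl
  | nil => intro j; rfl
  | fix P ih =>
    intro j
    simp only [Proc.liftD, Proc.wfRec]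
    rw [ih, Proc.guardedVar_liftD]

lemma Proc.hasRcv_substP (P : Proc V) : ∀ {j : ℕ} {S : Proc V} {c : Chan},
    P.hasRcv c = true → (P.substP j S).hasRcv c = true := by
  induction P with
  | broadcast c e P ih => intro j S c h; simp [Proc.hasRcv] at h
  | rcv c P Q ihP ihQ => intro j S c h; exact h
  | sigma P ih => intro j S c h; simp [Proc.hasRcv] at h
  | tau P ih => intro j S c h; simp [Proc.hasRcv] at h
  | sum P Q ihP ihQ =>
    intro j S c h
    simp [Proc.hasRcv, Proc.substP] at h ⊢
    rcases h with h | h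
    · exact Or.inl (ihP h)
    · exact Or.inr (ihQ h)
  | mtch b P Q ihP ihQ => intro j S c h; simp [Proc.hasRcv] at h
  | pvar X => intro j S c h; simp [Proc.hasRcv] at h
  | nil => intro j S c h; simp [Proc.hasRcv] at h
  | fix P ih => intro j S c h; exact ih h

/-- Number of unguarded `sum`/`fix` constructs: a termination measure for unfolding. -/
def Proc.mu : Proc V → ℕ
  | .sum P Q => P.mu + Q.mu + 1
  | .fix P => P.mu + 1
  | _ => 0

lemma Proc.mu_substP (P : Proc V) : ∀ {j : ℕ} {S : Proc V}, P.guardedVar j = true →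
    (P.substP j S).mu = P.mu := by
  induction P with
  | broadcast c e P ih => intro j S h; rfl
  | rcv c P Q ihP ihQ => intro j S h; rfl
  | sigma P ih => intro j S h; rfl
  | tau P ih => intro j S h; rfl
  | sum P Q ihP ihQ =>
    intro j S h
    simp [Proc.guardedVar] at h
    simp only [Proc.substP, Proc.mu]
    rw [ihP h.1, ihQ h.2]
  | mtch b P Q ihP ihQ => intro j S h; rfl
  | pvar X =>
    intro j S h
    simp [Proc.guardedVar] at h
    simp only [Proc.substP]
    rw [if_neg h]
    split <;> rfl
  | nil => intro j S h; rfl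
  | fix P ih =>
    intro j S h
    simp only [Proc.substP, Proc.mu]
    rw [ih h]

lemma Proc.closedUnder_substP (P : Proc V) : ∀ {j dk : ℕ} (S : Proc V),
    P.closedUnder dk (j + 1) = true → S.closedUnder dk 0 = true →
    (P.substP j S).closedUnder dk j = true := by
  induction P with
  | broadcast c e P ih =>
    intro j dk S h hS
    simp [Proc.closedUnder, Proc.substP] at h ⊢
    exact ⟨h.1, ih S h.2 hS⟩
  | rcv c P Q ihP ihQ =>
    intro j dk S h hS
    simp [Proc.closedUnder, Proc.substP] at h ⊢
    exact ⟨ihP _ h.1 (Proc.closedUnder_liftD S (Nat.zero_le _) hS), ihQ S h.2 hS⟩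
  | sigma P ih => intro j dk S h hS; exact ih S h hS
  | tau P ih => intro j dk S h hS; exact ih S h hS
  | sum P Q ihP ihQ =>
    intro j dk S h hS
    simp [Proc.closedUnder, Proc.substP] at h ⊢
    exact ⟨ihP S h.1 hS, ihQ S h.2 hS⟩
  | mtch b P Q ihP ihQ =>
    intro j dk S h hS
    simp [Proc.closedUnder, Proc.substP] at h ⊢
    exact ⟨⟨h.1.1, ihP S h.1.2 hS⟩, ihQ S h.2 hS⟩
  | pvar X =>
    intro j dk S h hS
    simp [Proc.closedUnder] at h
    simp only [Proc.substP]
    by_cases hx : X = j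
    · rw [if_pos hx]
      exact Proc.closedUnder_mono S le_rfl (Nat.zero_le _) hS
    · rw [if_neg hx, if_neg (by omega)]
      simp [Proc.closedUnder]
      omega
  | nil => intro j dk S h hS; rfl
  | fix P ih =>
    intro j dk S h hS
    simp only [Proc.substP]
    show (P.substP (j + 1) (S.liftP 0)).closedUnder dk (j + 1) = true
    rw [Proc.liftP_eq_of_closed S hS le_rfl]
    exact ih S h hS

lemma Proc.guardedVar_substP (P : Proc V) : ∀ {j k dk : ℕ} (S : Proc V),
    P.closedUnder dk (j + 1) = true → P.guardedVar k = true → k < j →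
    S.closedUnder dk 0 = true → (P.substP j S).guardedVar k = true := by
  induction P with
  | broadcast c e P ih => intro j k dk S hc hg hk hS; rfl
  | rcv c P Q ihP ihQ => intro j k dk S hc hg hk hS; rfl
  | sigma P ih => intro j k dk S hc hg hk hS; rfl
  | tau P ih => intro j k dk S hc hg hk hS; exact ih S hc hg hk hS
  | sum P Q ihP ihQ =>
    intro j k dk S hc hg hk hS
    simp [Proc.closedUnder] at hc
    simp [Proc.guardedVar, Proc.substP] at hg ⊢
    exact ⟨ihP S hc.1 hg.1 hk hS, ihQ S hc.2 hg.2 hk hS⟩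
  | mtch b P Q ihP ihQ => intro j k dk S hc hg hk hS; rfl
  | pvar X =>
    intro j k dk S hc hg hk hS
    simp [Proc.closedUnder] at hc
    simp [Proc.guardedVar] at hg
    simp only [Proc.substP]
    by_cases hx : X = j
    · rw [if_pos hx]
      exact Proc.guardedVar_of_closed S hS (Nat.zero_le _)
    · rw [if_neg hx, if_neg (by omega)]
      simp [Proc.guardedVar]
      omega
  | nil => intro j k dk S hc hg hk hS; rfl
  | fix P ih =>
    intro j k dk S hc hg hk hS
    simp only [Proc.substP]
    show (P.substP (j + 1) (S.liftP 0)).guardedVar (k + 1) = true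
    rw [Proc.liftP_eq_of_closed S hS le_rfl]
    exact ih S hc hg (by omega) hS

lemma Proc.wfRec_substP (P : Proc V) : ∀ {j dk : ℕ} (S : Proc V),
    P.closedUnder dk (j + 1) = true → P.wfRec = true → S.wfRec = true →
    S.closedUnder dk 0 = true → (P.substP j S).wfRec = true := by
  induction P with
  | broadcast c e P ih =>
    intro j dk S hc hw hSw hS
    simp [Proc.closedUnder] at hc
    exact ih S hc.2 hw hSw hS
  | rcv c P Q ihP ihQ =>
    intro j dk S hc hw hSw hS
    simp [Proc.closedUnder] at hc
    simp [Proc.wfRec, Proc.substP] at hw ⊢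
    refine ⟨ihP _ hc.1 hw.1 ?_ ?_, ihQ S hc.2 hw.2 hSw hS⟩
    · rw [Proc.wfRec_liftD]; exact hSw
    · exact Proc.closedUnder_liftD S (Nat.zero_le _) hS
  | sigma P ih => intro j dk S hc hw hSw hS; exact ih S hc hw hSw hS
  | tau P ih => intro j dk S hc hw hSw hS; exact ih S hc hw hSw hS
  | sum P Q ihP ihQ =>
    intro j dk S hc hw hSw hS
    simp [Proc.closedUnder] at hc
    simp [Proc.wfRec, Proc.substP] at hw ⊢
    exact ⟨ihP S hc.1 hw.1 hSw hS, ihQ S hc.2 hw.2 hSw hS⟩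
  | mtch b P Q ihP ihQ =>
    intro j dk S hc hw hSw hS
    simp [Proc.closedUnder] at hc
    simp [Proc.wfRec, Proc.substP] at hw ⊢
    exact ⟨ihP S hc.1.2 hw.1 hSw hS, ihQ S hc.2 hw.2 hSw hS⟩
  | pvar X =>
    intro j dk S hc hw hSw hS
    simp only [Proc.substP]
    by_cases hx : X = j
    · rw [if_pos hx]; exact hSw
    · rw [if_neg hx]; split <;> rfl
  | nil => intro j dk S hc hw hSw hS; rfl
  | fix P ih =>
    intro j dk S hc hw hSw hS
    simp [Proc.wfRec] at hw
    simp only [Proc.substP, Proc.wfRec]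
    rw [Proc.liftP_eq_of_closed S hS le_rfl]
    simp only [Bool.and_eq_true]
    exact ⟨ih S hc hw.1 hSw hS,
      Proc.guardedVar_substP P S hc hw.2 (Nat.succ_pos _) hS⟩

lemma proc_step (errv : V) (δ : V → ℕ) (Γ : ChanEnv V) :
    ∀ (n : ℕ) (P : Proc V), P.mu ≤ n → P.closedUnder 0 0 = true → P.wfRec = true →
    (∃ P', Step errv δ Γ (.proc P) .sigma (.proc P')) ∨
    (∃ lam W, Step errv δ Γ (.proc P) lam W ∧
      (lam = Label.tau ∨ ∃ c v, lam = Label.out c v)) := by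
  intro n
  induction n using Nat.strong_induction_on with
  | _ n ih =>
    intro P hmu hc hw
    cases P with
    | broadcast c e P =>
      have hce : e.closedUnder 0 = true := by
        simp [Proc.closedUnder] at hc; exact hc.1
      obtain ⟨v, hv⟩ := Exp.eval_of_closed hce
      exact Or.inr ⟨_, _, Step.snd hv, Or.inr ⟨c, v, rfl⟩⟩
    | rcv c P Q =>
      rcases Nat.eq_zero_or_pos (Γ c).1 with h0 | h0
      · exact Or.inl ⟨Q, Step.timeout h0⟩
      · exact Or.inr ⟨_, _, Step.rcvLate h0, Or.inl rfl⟩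
    | sigma P => exact Or.inl ⟨P, Step.sleep⟩
    | tau P => exact Or.inr ⟨_, _, Step.tauStep, Or.inl rfl⟩
    | sum P Q =>
      simp [Proc.mu] at hmu
      simp [Proc.closedUnder] at hc
      simp [Proc.wfRec] at hw
      rcases ih P.mu (by omega) P le_rfl hc.1 hw.1 with ⟨P', hP⟩ | ⟨lam, W, hP, hl⟩
      · rcases ih Q.mu (by omega) Q le_rfl hc.2 hw.2 with ⟨Q', hQ⟩ | ⟨lam, W, hQ, hl⟩
        · exact Or.inl ⟨_, Step.sumTime hP hQ⟩
        · exact Or.inr ⟨lam, W, Step.sumR hQ hl, hl⟩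
      · exact Or.inr ⟨lam, W, Step.sumL hP hl, hl⟩
    | mtch b P Q =>
      have hb : ∃ bv, BEval Γ b bv := by
        cases b with
        | beq e1 e2 =>
          simp [Proc.closedUnder, BExp.closedUnder] at hc
          obtain ⟨v1, h1⟩ := Exp.eval_of_closed hc.1.1.1
          obtain ⟨v2, h2⟩ := Exp.eval_of_closed hc.1.1.2
          by_cases hv : v1 = v2
          · exact ⟨true, BEval.beqT h1 (by rw [hv]; exact h2)⟩
          · exact ⟨false, BEval.beqF h1 h2 hv⟩
        | exposed c =>
          rcases Nat.eq_zero_or_pos (Γ c).1 with h0 | h0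
          · exact ⟨false, BEval.expF h0⟩
          · exact ⟨true, BEval.expT h0⟩
      obtain ⟨bv, hbe⟩ := hb
      cases bv
      · exact Or.inr ⟨_, _, Step.elseB hbe, Or.inl rfl⟩
      · exact Or.inr ⟨_, _, Step.thenB hbe, Or.inl rfl⟩
    | pvar X => simp [Proc.closedUnder] at hc
    | nil => exact Or.inl ⟨_, Step.timeNil⟩
    | fix P =>
      simp [Proc.mu] at hmu
      have hc1 : P.closedUnder 0 1 = true := hc
      have hw1 : P.wfRec = true ∧ P.guardedVar 0 = true := by
        simpa [Proc.wfRec, Bool.and_eq_true] using hw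
      have hc' : (Proc.substP P 0 (.fix P)).closedUnder 0 0 = true :=
        Proc.closedUnder_substP P (.fix P) hc1 hc1
      have hw' : (Proc.substP P 0 (.fix P)).wfRec = true :=
        Proc.wfRec_substP P (.fix P) hc1 hw1.1 hw hc1
      have hmu' : (Proc.substP P 0 (.fix P)).mu = P.mu := Proc.mu_substP P hw1.2
      rcases ih P.mu (by omega) _ (le_of_eq hmu') hc' hw' with ⟨P', h'⟩ | ⟨lam, W, h', hl⟩
      · exact Or.inl ⟨P', Step.recS h'⟩
      · exact Or.inr ⟨lam, W, Step.recS h', hl⟩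

lemma proc_inp_step (errv : V) (δ : V → ℕ) (c : Chan) (v : V) :
    ∀ (n : ℕ) (P : Proc V) (Γ : ChanEnv V), P.mu ≤ n → P.closedUnder 0 0 = true →
    P.wfRec = true → P.hasRcv c = true → (Γ c).1 = 0 →
    ∃ W', Step errv δ Γ (.proc P) (.inp c v) W' := by
  intro n
  induction n using Nat.strong_induction_on with
  | _ n ih =>
    intro P Γ hmu hc hw hr hΓ
    cases P with
    | broadcast d e P => simp [Proc.hasRcv] at hr
    | rcv d P Q =>
      simp [Proc.hasRcv] at hr
      subst hr
      exact ⟨_, Step.rcv hΓ⟩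
    | sigma P => simp [Proc.hasRcv] at hr
    | tau P => simp [Proc.hasRcv] at hr
    | sum P Q =>
      simp [Proc.mu] at hmu
      simp [Proc.closedUnder] at hc
      simp [Proc.wfRec] at hw
      simp [Proc.hasRcv] at hr
      rcases hr with hr | hr
      · obtain ⟨W', h'⟩ := ih P.mu (by omega) P Γ le_rfl hc.1 hw.1 hr hΓ
        exact ⟨W', Step.sumRcvL h' ⟨hΓ, hr⟩⟩
      · obtain ⟨W', h'⟩ := ih Q.mu (by omega) Q Γ le_rfl hc.2 hw.2 hr hΓ
        exact ⟨W', Step.sumRcvR h' ⟨hΓ, hr⟩⟩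
    | mtch b P Q => simp [Proc.hasRcv] at hr
    | pvar X => simp [Proc.hasRcv] at hr
    | nil => simp [Proc.hasRcv] at hr
    | fix P =>
      simp [Proc.mu] at hmu
      have hc1 : P.closedUnder 0 1 = true := hc
      have hw1 : P.wfRec = true ∧ P.guardedVar 0 = true := by
        simpa [Proc.wfRec, Bool.and_eq_true] using hw
      have hc' : (Proc.substP P 0 (.fix P)).closedUnder 0 0 = true :=
        Proc.closedUnder_substP P (.fix P) hc1 hc1
      have hw' : (Proc.substP P 0 (.fix P)).wfRec = true :=
        Proc.wfRec_substP P (.fix P) hc1 hw1.1 hw hc1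
      have hmu' : (Proc.substP P 0 (.fix P)).mu = P.mu := Proc.mu_substP P hw1.2
      have hr' : (Proc.substP P 0 (.fix P)).hasRcv c = true :=
        Proc.hasRcv_substP P hr
      obtain ⟨W', h'⟩ := ih P.mu (by omega) _ Γ (le_of_eq hmu') hc' hw' hr' hΓ
      exact ⟨W', Step.recS h'⟩

lemma sys_inp_step (errv : V) (δ : V → ℕ) (c : Chan) (v : V) :
    ∀ (W : Sys V) (Γ : ChanEnv V), W.closedUnder 0 0 = true → W.wfRec = true →
    W.hasRcv c = true → (Γ c).1 = 0 →
    ∃ W', Step errv δ Γ W (.inp c v) W' := by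
  intro W
  induction W with
  | proc P =>
    intro Γ hc hw hr hΓ
    exact proc_inp_step errv δ c v P.mu P Γ le_rfl hc hw hr hΓ
  | active d P => intro Γ _ _ hr _; simp [Sys.hasRcv] at hr
  | par W1 W2 ih1 ih2 =>
    intro Γ hc hw hr hΓ
    simp [Sys.closedUnder] at hc
    simp [Sys.wfRec] at hw
    simp [Sys.hasRcv] at hr
    have h1 : ∃ W1', Step errv δ Γ W1 (.inp c v) W1' := by
      by_cases hI : Isrcv Γ W1 c
      · exact ih1 Γ hc.1 hw.1 hI.2 hI.1
      · exact ⟨W1, Step.rcvIgn hI⟩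
    have h2 : ∃ W2', Step errv δ Γ W2 (.inp c v) W2' := by
      by_cases hI : Isrcv Γ W2 c
      · exact ih2 Γ hc.2 hw.2 hI.2 hI.1
      · exact ⟨W2, Step.rcvIgn hI⟩
    obtain ⟨W1', h1'⟩ := h1
    obtain ⟨W2', h2'⟩ := h2
    exact ⟨_, Step.rcvPar h1' h2'⟩
  | res d n w W ihW =>
    intro Γ hc hw hr hΓ
    by_cases hd : d = c
    · simp [Sys.hasRcv, hd] at hr
    · simp [Sys.hasRcv, hd] at hr
      have hΓ' : ((updEnv Γ d (n, w)) c).1 = 0 := by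
        unfold updEnv
        rw [if_neg (fun h => hd h.symm)]
        exact hΓ
      obtain ⟨W', h'⟩ := ihW (updEnv Γ d (n, w)) hc hw hr hΓ'
      refine ⟨_, Step.resV h' ?_ ?_⟩
      · intro hu
        exact hd (hu.symm)
      · intro hl; cases hl

lemma any_inp (errv : V) (δ : V → ℕ) (c : Chan) (v : V)
    (W : Sys V) (Γ : ChanEnv V) (hc : W.closedUnder 0 0 = true) (hw : W.wfRec = true) :
    ∃ W', Step errv δ Γ W (.inp c v) W' := by
  by_cases hI : Isrcv Γ W c
  · exact sys_inp_step errv δ c v W Γ hc hw hI.2 hI.1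
  · exact ⟨W, Step.rcvIgn hI⟩

lemma sys_step (errv : V) (δ : V → ℕ) {Γ : ChanEnv V} {W : Sys V} (hwf : WF Γ W) :
    W.closedUnder 0 0 = true → W.wfRec = true →
    (∃ W', Step errv δ Γ W .sigma W') ∨
    (∃ W', Step errv δ Γ W .tau W') ∨
    (∃ c v W', Step errv δ Γ W (.out c v) W') := by
  induction hwf with
  | wfProc P =>
    intro hc hw
    rcases proc_step errv δ _ P.mu P le_rfl hc hw with ⟨P', h'⟩ | ⟨lam, W', h', hl⟩
    · exact Or.inl ⟨_, h'⟩
    · rcases hl with rfl | ⟨c, v, rfl⟩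
      · exact Or.inr (Or.inl ⟨_, h'⟩)
      · exact Or.inr (Or.inr ⟨c, v, _, h'⟩)
  | @wfActive Γ c P hpos =>
    intro _ _
    by_cases h1 : (Γ c).1 = 1
    · exact Or.inl ⟨_, Step.endRcv h1 rfl⟩
    · exact Or.inl ⟨_, Step.actRcv (by omega)⟩
  | @wfPar Γ W1 W2 h1 h2 ih1 ih2 =>
    intro hc hw
    simp [Sys.closedUnder] at hc
    simp [Sys.wfRec] at hw
    rcases ih1 hc.1 hw.1 with ⟨W1', h1'⟩ | ⟨W1', h1'⟩ | ⟨c, v, W1', h1'⟩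
    · rcases ih2 hc.2 hw.2 with ⟨W2', h2'⟩ | ⟨W2', h2'⟩ | ⟨c, v, W2', h2'⟩
      · exact Or.inl ⟨_, Step.timePar h1' h2'⟩
      · exact Or.inr (Or.inl ⟨_, Step.tauParR h2'⟩)
      · obtain ⟨W1'', h1''⟩ := any_inp errv δ c v W1 Γ hc.1 hw.1
        exact Or.inr (Or.inr ⟨c, v, _, Step.syncR h1'' h2'⟩)
    · exact Or.inr (Or.inl ⟨_, Step.tauParL h1'⟩)
    · obtain ⟨W2'', h2''⟩ := any_inp errv δ c v W2 Γ hc.2 hw.2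
      exact Or.inr (Or.inr ⟨c, v, _, Step.sync h1' h2''⟩)
  | @wfRes Γ c n v W hW ihW =>
    intro hc hw
    have hc' : W.closedUnder 0 0 = true := hc
    have hw' : W.wfRec = true := hw
    rcases ihW hc' hw' with ⟨W', h'⟩ | ⟨W', h'⟩ | ⟨d, w, W', h'⟩
    · exact Or.inl ⟨_, Step.resT h'⟩
    · refine Or.inr (Or.inl ⟨_, Step.resV h' ?_ ?_⟩)
      · intro hu; exact hu
      · intro hl; cases hl
    · by_cases hd : d = c
      · subst hd
        exact Or.inr (Or.inl ⟨_, Step.resI h'⟩)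
      · refine Or.inr (Or.inr ⟨d, w, _, Step.resV h' ?_ ?_⟩)
        · intro hu; exact hd hu
        · intro hl; cases hl

end Patience


/-- Patience (Proposition 4.9 of the paper). -/
theorem patience {V : Type} (errv : V) (δ : V → ℕ) (hδ : ∀ v : V, 1 ≤ δ v)
    (C : Config V) (hp : C.2.proper) (hwf : WF C.1 C.2)
    (h : ¬ ∃ C' : Config V, RedI errv δ C C') :
    ∃ C'' : Config V, RedT errv δ C C'' := by
  obtain ⟨Γ, W⟩ := C
  obtain ⟨hc, hw⟩ := hp
  rcases sys_step errv δ hwf hc hw with ⟨W', h'⟩ | ⟨W', h'⟩ | ⟨c, v, W', h'⟩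
  · exact ⟨(updL errv δ .sigma Γ, W'), h', rfl⟩
  · exact absurd ⟨(Γ, W'), Or.inl ⟨h', rfl⟩⟩ h
  · exact absurd ⟨(updBcast errv δ Γ c v, W'), Or.inr ⟨c, v, h', rfl⟩⟩ h

end CCCP
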